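/- Let Z be a separable connected abelian Banach–Lie group whose character group Ẑ is uncountable. Then Z admits a norm-continuous unitary representation containing no nonzero Z-eigenvector; hence not every bounded representation of Z is a direct sum of eigenspaces. -/

import Mathlib

open MeasureTheory Complex Filter Set
open scoped ENNReal NNReal

noncomputable section

lemma lipschitz_cos : LipschitzWith 1 Real.cos := by
  apply lipschitzWith_of_nnnorm_deriv_le Real.differentiable_cos
  intro x
  rw [Real.deriv_cos]
  have h := Real.abs_sin_le_one x
  rw [← NNReal.coe_le_coe]
  simpa using h

lemma lipschitz_sin : LipschitzWith 1 Real.sin := by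
  apply lipschitzWith_of_nnnorm_deriv_le Real.differentiable_sin
  intro x
  rw [Real.deriv_sin]
  have h := Real.abs_cos_le_one x
  rw [← NNReal.coe_le_coe]
  simpa using h

lemma expI_lip (a b : ℝ) :
    ‖Complex.exp (a * Complex.I) - Complex.exp (b * Complex.I)‖ ≤ 2 * |a - b| := by
  have h1 : Complex.exp (a * Complex.I) = (Real.cos a : ℂ) + (Real.sin a : ℂ) * Complex.I := by
    rw [Complex.exp_mul_I]; simp [Complex.ofReal_cos, Complex.ofReal_sin]
  have h2 : Complex.exp (b * Complex.I) = (Real.cos b : ℂ) + (Real.sin b : ℂ) * Complex.I := by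
    rw [Complex.exp_mul_I]; simp [Complex.ofReal_cos, Complex.ofReal_sin]
  have hc := lipschitz_cos.dist_le_mul a b
  have hs := lipschitz_sin.dist_le_mul a b
  rw [Real.dist_eq, NNReal.coe_one, one_mul, Real.dist_eq] at hc hs
  calc ‖Complex.exp (a * Complex.I) - Complex.exp (b * Complex.I)‖
      = ‖((Real.cos a - Real.cos b : ℝ) : ℂ) + ((Real.sin a - Real.sin b : ℝ) : ℂ) * Complex.I‖ := by
        rw [show Complex.exp (a * Complex.I) - Complex.exp (b * Complex.I)
            = ((Real.cos a - Real.cos b : ℝ) : ℂ) + ((Real.sin a - Real.sin b : ℝ) : ℂ) * Complex.I by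
          rw [h1, h2]; push_cast; ring]
    _ ≤ ‖((Real.cos a - Real.cos b : ℝ) : ℂ)‖ + ‖((Real.sin a - Real.sin b : ℝ) : ℂ) * Complex.I‖ :=
        norm_add_le _ _
    _ ≤ |a - b| + |a - b| := by
        rw [norm_mul, Complex.norm_I, mul_one, Complex.norm_real, Complex.norm_real]
        exact add_le_add hc hs
    _ = 2 * |a - b| := by ring

-- rationality separation lemma
lemma rat_sep {s t : ℝ}
    (h : ∀ q : ℚ, Complex.exp (((2 * Real.pi * (q * s) : ℝ)) * Complex.I)
        = Complex.exp (((2 * Real.pi * (q * t) : ℝ)) * Complex.I)) : s = t := by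
  have key : ∀ q : ℚ, ∃ n : ℤ, (q : ℝ) * (s - t) = n := by
    intro q
    obtain ⟨n, hn⟩ := Complex.exp_eq_exp_iff_exists_int.mp (h q)
    refine ⟨n, ?_⟩
    have := hn
    have h2 : ((2 * Real.pi * (q * s) : ℝ) : ℂ) = ((2 * Real.pi * (q * t) : ℝ) : ℂ) + n * (2 * Real.pi) := by
      have hI : ((2 * Real.pi * (q * s) : ℝ) : ℂ) * Complex.I
          = (((2 * Real.pi * (q * t) : ℝ) : ℂ) + n * (2 * Real.pi)) * Complex.I := by
        rw [hn]; ring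
      exact mul_right_cancel₀ Complex.I_ne_zero hI
    have h3 : (2 * Real.pi * (q * s) : ℝ) = (2 * Real.pi * (q * t) : ℝ) + n * (2 * Real.pi) := by
      exact_mod_cast h2
    have h2pi : (2 * Real.pi) ≠ 0 := by positivity
    apply mul_left_cancel₀ h2pi
    linear_combination h3
  obtain ⟨m, hm⟩ := key 1
  rw [Rat.cast_one, one_mul] at hm
  by_contra hne
  have hmne : m ≠ 0 := by
    intro h0; apply hne; have := hm; rw [h0] at this; simpa [sub_eq_zero] using this
  obtain ⟨n, hn⟩ := key (1 / (2 * m))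
  rw [hm] at hn
  have hq : ((1 / (2 * m) : ℚ) : ℝ) = 1 / (2 * (m : ℝ)) := by push_cast; ring
  rw [hq] at hn
  have hm2 : (m : ℝ) ≠ 0 := Int.cast_ne_zero.mpr hmne
  have h2n : ((2 * n : ℤ) : ℝ) = 1 := by
    push_cast
    rw [← hn]
    field_simp
  have : (2 * n : ℤ) = 1 := by exact_mod_cast h2n
  omega

section MulOp

variable {X : Type} [MeasurableSpace X] {μ : Measure X}

lemma memℒp_mul (g : X → ℂ) (hg : Measurable g) (hg1 : ∀ k, ‖g k‖ = 1) (f : Lp ℂ 2 μ) :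
    MemLp (fun k => g k * f k) 2 μ := by
  constructor
  · exact hg.aestronglyMeasurable.mul (Lp.aestronglyMeasurable f)
  · rw [eLpNorm_congr_norm_ae (f := fun k => g k * f k) (g := fun k => (f : X → ℂ) k)
      (ae_of_all _ fun k => by rw [norm_mul, hg1, one_mul])]
    exact Lp.eLpNorm_lt_top f

/-- Multiplication by a unimodular measurable function, as a continuous linear map on L². -/
def mulLp (μ : Measure X) (g : X → ℂ) (hg : Measurable g) (hg1 : ∀ k, ‖g k‖ = 1) :
    Lp ℂ 2 μ →L[ℂ] Lp ℂ 2 μ :=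
  LinearMap.mkContinuous
    { toFun := fun f => (memℒp_mul g hg hg1 f).toLp _
      map_add' := by
        intro f f'
        apply Lp.ext
        filter_upwards [MemLp.coeFn_toLp (memℒp_mul g hg hg1 (f + f')),
          MemLp.coeFn_toLp (memℒp_mul g hg hg1 f),
          MemLp.coeFn_toLp (memℒp_mul g hg hg1 f'),
          Lp.coeFn_add f f',
          Lp.coeFn_add ((memℒp_mul g hg hg1 f).toLp _) ((memℒp_mul g hg hg1 f').toLp _)]
          with k h1 h2 h3 h4 h5
        rw [h1, h5, Pi.add_apply, h2, h3, h4, Pi.add_apply]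
        ring
      map_smul' := by
        intro c f
        apply Lp.ext
        filter_upwards [MemLp.coeFn_toLp (memℒp_mul g hg hg1 (c • f)),
          MemLp.coeFn_toLp (memℒp_mul g hg hg1 f),
          Lp.coeFn_smul c f,
          Lp.coeFn_smul c ((memℒp_mul g hg hg1 f).toLp _)]
          with k h1 h2 h3 h4
        rw [h1, RingHom.id_apply, h4, Pi.smul_apply, h2, h3, Pi.smul_apply]
        simp [smul_eq_mul]
        ring }
    1
    (by
      intro f
      simp only [LinearMap.coe_mk, AddHom.coe_mk, one_mul]
      rw [Lp.norm_toLp _ (memℒp_mul g hg hg1 f)]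
      rw [eLpNorm_congr_norm_ae (f := fun k => g k * f k) (g := fun k => (f : X → ℂ) k)
        (ae_of_all _ fun k => by rw [norm_mul, hg1, one_mul])]
      exact le_of_eq (Lp.norm_def f).symm)

lemma mulLp_coeFn (g : X → ℂ) (hg : Measurable g) (hg1 : ∀ k, ‖g k‖ = 1) (f : Lp ℂ 2 μ) :
    (mulLp μ g hg hg1 f : X → ℂ) =ᵐ[μ] fun k => g k * f k := by
  have h : mulLp μ g hg hg1 f = (memℒp_mul g hg hg1 f).toLp _ := rfl
  rw [h]
  exact MemLp.coeFn_toLp _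

end MulOp

theorem key {z : Type} [NormedAddCommGroup z] [NormedSpace ℝ z]
    (Γ : AddSubgroup z)
    {X : Type} [MeasurableSpace X] (μ : Measure X)
    [IsProbabilityMeasure μ] [NullSingletonClass μ]
    (e : z → X → ℝ) (R : ℝ)
    (hadd : ∀ x y k, e (x + y) k = e x k + e y k)
    (hsmul : ∀ (r : ℝ) (x : z) (k : X), e (r • x) k = r * e x k)
    (hmeas : ∀ x, Measurable (e x))
    (hbound : ∀ x k, |e x k| ≤ R * ‖x‖)
    (hint : ∀ γ ∈ Γ, ∀ k, ∃ n : ℤ, e γ k = (n : ℝ))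
    (u : ℕ → z)
    (hsep : ∀ k k' : X, (∀ n, e (u n) k = e (u n) k') → k = k') :
    ∃ (H : Type) (_ : NormedAddCommGroup H) (_ : InnerProductSpace ℂ H) (_ : CompleteSpace H)
      (π : z → (H →L[ℂ] H)),
      (∀ x, π x ∈ unitary (H →L[ℂ] H)) ∧
      (∀ x y, π (x + y) = π x * π y) ∧
      (∀ γ ∈ Γ, π γ = 1) ∧
      Continuous π ∧
      Nontrivial H ∧
      ∀ (v : H) (c : z → ℂ), (∀ x, π x v = c x • v) → v = 0 := by
  classical
  set g : z → X → ℂ := fun x k => Complex.exp ((2 * Real.pi * e x k : ℝ) * Complex.I) with hgdef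
  have hgmeas : ∀ x, Measurable (g x) := fun x =>
    ((Complex.measurable_ofReal.comp ((hmeas x).const_mul (2 * Real.pi))).mul_const
      Complex.I).cexp
  have hg1 : ∀ x k, ‖g x k‖ = 1 := fun x k => by
    simp only [hgdef]
    exact Complex.norm_exp_ofReal_mul_I _
  set T : z → (Lp ℂ 2 μ →L[ℂ] Lp ℂ 2 μ) :=
    fun x => mulLp μ (g x) (hgmeas x) (hg1 x) with hTdef
  have coeT : ∀ x (f : Lp ℂ 2 μ), (T x f : X → ℂ) =ᵐ[μ] fun k => g x k * f k :=
    fun x f => mulLp_coeFn (g x) (hgmeas x) (hg1 x) f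
  -- additivity of g
  have hgadd : ∀ x y k, g (x + y) k = g x k * g y k := by
    intro x y k
    simp only [hgdef]
    rw [← Complex.exp_add]
    congr 1
    rw [hadd x y k]
    push_cast
    ring
  have he0 : ∀ k, e 0 k = 0 := by
    intro k
    have := hsmul 0 0 k
    simpa using this
  have hg0 : ∀ k, g 0 k = 1 := by
    intro k
    simp [hgdef, he0 k]
  -- multiplicativity
  have hmul : ∀ x y, T (x + y) = T x * T y := by
    intro x y
    apply ContinuousLinearMap.ext
    intro f
    apply Lp.ext
    have h2 := coeT x (T y f)
    filter_upwards [coeT (x + y) f, h2, coeT y f] with k h1 h2 h3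
    have : ((T x * T y) f : X → ℂ) k = (T x (T y f) : X → ℂ) k := rfl
    rw [h1, this, h2, h3, hgadd x y k]
    ring
  -- identity
  have hT0 : T 0 = 1 := by
    apply ContinuousLinearMap.ext
    intro f
    apply Lp.ext
    filter_upwards [coeT 0 f] with k h1
    rw [h1, hg0 k, one_mul]
    rfl
  -- adjoint
  have hstar : ∀ x, star (T x) = T (-x) := by
    intro x
    rw [ContinuousLinearMap.star_eq_adjoint]
    symm
    rw [ContinuousLinearMap.eq_adjoint_iff]
    intro f h
    rw [L2.inner_def, L2.inner_def]
    apply integral_congr_ae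
    filter_upwards [coeT (-x) f, coeT x h] with k h1 h2
    rw [h1, h2]
    simp only [RCLike.inner_apply]
    have hneg : e (-x) k = - e x k := by
      have := hsmul (-1) x k
      simpa using this
    have hconj : (starRingEnd ℂ) (g (-x) k) = g x k := by
      simp only [hgdef, ← Complex.exp_conj, map_mul, Complex.conj_ofReal, Complex.conj_I, hneg]
      push_cast
      ring_nf
    rw [map_mul, hconj]
    ring
  -- unitary
  have huni : ∀ x, T x ∈ unitary (Lp ℂ 2 μ →L[ℂ] Lp ℂ 2 μ) := by
    intro x
    constructor
    · rw [hstar x, ← hmul, neg_add_cancel, hT0]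
    · rw [hstar x, ← hmul, add_neg_cancel, hT0]
  -- Γ is killed
  have hgam : ∀ γ ∈ Γ, T γ = 1 := by
    intro γ hγ
    apply ContinuousLinearMap.ext
    intro f
    apply Lp.ext
    filter_upwards [coeT γ f] with k h1
    obtain ⟨n, hn⟩ := hint γ hγ k
    have : g γ k = 1 := by
      simp only [hgdef, hn]
      rw [show ((2 * Real.pi * (n : ℝ) : ℝ) : ℂ) * Complex.I = (n : ℤ) * (2 * Real.pi * Complex.I) by
        push_cast; ring]
      exact Complex.exp_int_mul_two_pi_mul_I n
    rw [h1, this, one_mul]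
    rfl
  -- norm continuity
  have hcont : Continuous T := by
    have hlip : LipschitzWith (4 * Real.pi * |R|).toNNReal T := by
      apply LipschitzWith.of_dist_le_mul
      intro x y
      rw [dist_eq_norm, dist_eq_norm]
      have hC : (0 : ℝ) ≤ 4 * Real.pi * |R| := by positivity
      rw [Real.coe_toNNReal _ hC]
      apply ContinuousLinearMap.opNorm_le_bound _ (by positivity)
      intro f
      set C' : ℝ := 4 * Real.pi * |R| * ‖x - y‖ with hC'def
      have hC'0 : 0 ≤ C' := by positivity
      have hgbd : ∀ k, ‖g x k - g y k‖ ≤ C' := by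
        intro k
        have h1 := expI_lip (2 * Real.pi * e x k) (2 * Real.pi * e y k)
        have h2 : e x k - e y k = e (x - y) k := by
          have := hadd (x - y) y k
          rw [sub_add_cancel] at this
          linarith
        have h3 : |e (x - y) k| ≤ |R| * ‖x - y‖ := by
          refine (hbound (x - y) k).trans ?_
          exact mul_le_mul_of_nonneg_right (le_abs_self R) (norm_nonneg _)
        calc ‖g x k - g y k‖ ≤ 2 * |2 * Real.pi * e x k - 2 * Real.pi * e y k| := h1
          _ = 4 * Real.pi * |e (x - y) k| := by
              rw [← h2, show 2 * Real.pi * e x k - 2 * Real.pi * e y k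
                = 2 * Real.pi * (e x k - e y k) by ring, abs_mul,
                _root_.abs_of_nonneg (by positivity : (0:ℝ) ≤ 2 * Real.pi)]
              ring
          _ ≤ 4 * Real.pi * (|R| * ‖x - y‖) := by
              apply mul_le_mul_of_nonneg_left h3 (by positivity)
          _ = C' := by rw [hC'def]; ring
      have h4 : ((T x - T y) f : X → ℂ) =ᵐ[μ] fun k => (g x k - g y k) * f k := by
        have hsub : ((T x - T y) f : X → ℂ) =ᵐ[μ] (T x f : X → ℂ) - (T y f : X → ℂ) := by
          have : (T x - T y) f = T x f - T y f := rfl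
          rw [this]
          exact Lp.coeFn_sub _ _
        filter_upwards [hsub, coeT x f, coeT y f] with k h5 h6 h7
        simp only [Pi.sub_apply] at h5
        rw [h5, h6, h7]
        ring
      rw [Lp.norm_def, Lp.norm_def]
      rw [eLpNorm_congr_ae h4]
      have h5 : eLpNorm (fun k => (g x k - g y k) * (f : X → ℂ) k) 2 μ
          ≤ eLpNorm ((C' : ℂ) • (f : X → ℂ)) 2 μ := by
        apply eLpNorm_mono_ae
        apply ae_of_all
        intro k
        simp only [Pi.smul_apply, smul_eq_mul, norm_mul]
        rw [Complex.norm_real, Real.norm_eq_abs, _root_.abs_of_nonneg hC'0]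
        exact mul_le_mul_of_nonneg_right (hgbd k) (norm_nonneg _)
      have h6 : eLpNorm ((C' : ℂ) • (f : X → ℂ)) 2 μ
          = (‖(C' : ℂ)‖₊ : ℝ≥0∞) * eLpNorm (f : X → ℂ) 2 μ :=
        eLpNorm_const_smul _ _ _ _
      rw [h6] at h5
      have h7 : ((‖(C' : ℂ)‖₊ : ℝ≥0∞) * eLpNorm (f : X → ℂ) 2 μ) ≠ ⊤ := by
        apply ENNReal.mul_ne_top
        · simp
        · exact (Lp.eLpNorm_lt_top f).ne
      calc (eLpNorm (fun k => (g x k - g y k) * (f : X → ℂ) k) 2 μ).toReal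
          ≤ ((‖(C' : ℂ)‖₊ : ℝ≥0∞) * eLpNorm (f : X → ℂ) 2 μ).toReal := by
            exact ENNReal.toReal_mono h7 h5
        _ = C' * (eLpNorm (f : X → ℂ) 2 μ).toReal := by
            rw [ENNReal.toReal_mul]
            congr 1
            simp [Complex.norm_real, _root_.abs_of_nonneg hC'0]
        _ = 4 * Real.pi * |R| * ‖x - y‖ * (eLpNorm (f : X → ℂ) 2 μ).toReal := by rw [hC'def]
    exact hlip.continuous
  -- nontriviality
  have hne : Nontrivial (Lp ℂ 2 μ) := by
    have h1 : MemLp (fun _ : X => (1 : ℂ)) 2 μ := memLp_const 1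
    refine ⟨h1.toLp _, 0, ?_⟩
    intro h
    have h2 : (fun _ : X => (1 : ℂ)) =ᵐ[μ] 0 := by
      have h3 := h1.coeFn_toLp
      rw [h] at h3
      exact h3.symm.trans (Lp.coeFn_zero _ _ _)
    have h4 : ∀ᵐ _k ∂μ, (1 : ℂ) = 0 := h2
    rw [ae_iff] at h4
    simp only [one_ne_zero, not_false_iff, Set.setOf_true] at h4
    rw [measure_univ] at h4
    exact one_ne_zero h4
  refine ⟨Lp ℂ 2 μ, inferInstance, inferInstance, inferInstance, T, huni, hmul, hgam, hcont, hne, ?_⟩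
  -- no eigenvectors
  intro v c hvc
  have hae : ∀ x : z, ∀ᵐ k ∂μ, g x k * (v : X → ℂ) k = c x * (v : X → ℂ) k := by
    intro x
    have h1 := coeT x v
    have h2 : (T x v : X → ℂ) =ᵐ[μ] fun k => c x * (v : X → ℂ) k := by
      rw [hvc x]
      filter_upwards [Lp.coeFn_smul (c x) v] with k hk
      rw [hk]
      simp [smul_eq_mul]
    filter_upwards [h1.symm.trans h2] with k hk
    exact hk
  have hall : ∀ᵐ k ∂μ, ∀ p : ℕ × ℚ,
      g ((p.2 : ℝ) • u p.1) k * (v : X → ℂ) k = c ((p.2 : ℝ) • u p.1) * (v : X → ℂ) k :=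
    ae_all_iff.mpr fun p => hae ((p.2 : ℝ) • u p.1)
  set P : X → Prop := fun k => ∀ p : ℕ × ℚ,
      g ((p.2 : ℝ) • u p.1) k * (v : X → ℂ) k = c ((p.2 : ℝ) • u p.1) * (v : X → ℂ) k with hPdef
  have hsub : Set.Subsingleton {k | P k ∧ (v : X → ℂ) k ≠ 0} := by
    rintro k ⟨hPk, hvk⟩ k' ⟨hPk', hvk'⟩
    apply hsep
    intro n
    apply rat_sep
    intro q
    have h1 := hPk (n, q)
    have h2 := hPk' (n, q)
    simp only at h1 h2
    have h3 : g ((q : ℝ) • u n) k = c ((q : ℝ) • u n) := by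
      exact mul_right_cancel₀ hvk h1
    have h4 : g ((q : ℝ) • u n) k' = c ((q : ℝ) • u n) := by
      exact mul_right_cancel₀ hvk' h2
    have h5 : g ((q : ℝ) • u n) k = g ((q : ℝ) • u n) k' := h3.trans h4.symm
    simp only [hgdef, hsmul] at h5
    convert h5 using 3 <;> ring
  have hnull : μ {k | ¬ P k} = 0 := ae_iff.mp hall
  have h0 : μ {k | (v : X → ℂ) k ≠ 0} = 0 := by
    apply measure_mono_null
      (show {k | (v : X → ℂ) k ≠ 0} ⊆ {k | P k ∧ (v : X → ℂ) k ≠ 0} ∪ {k | ¬ P k} by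
        intro k hk
        by_cases h : P k
        · exact Or.inl ⟨h, hk⟩
        · exact Or.inr h)
    exact measure_union_null (hsub.measure_zero μ) hnull
  apply Lp.ext
  have hv0 : ∀ᵐ k ∂μ, (v : X → ℂ) k = 0 := by
    rw [ae_iff]
    simpa using h0
  filter_upwards [hv0, Lp.coeFn_zero ℂ 2 μ] with k h1 h2
  simp [h1, h2]

/-- If `Z = z/Γ` is a separable connected abelian Banach–Lie group (`z` a separable Banach
space, `Γ` a discrete subgroup) whose character group `{α ∈ z' : α(Γ) ⊆ ℤ}` is uncountable,
then `Z` admits a norm-continuous unitary representation with no nonzero eigenvector. -/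
theorem stmt_7 {z : Type} [NormedAddCommGroup z] [NormedSpace ℝ z] [CompleteSpace z]
    [TopologicalSpace.SeparableSpace z]
    (Γ : AddSubgroup z) (hΓdisc : ∃ ε > 0, ∀ γ ∈ Γ, γ ≠ 0 → ε ≤ ‖γ‖)
    (huncount : ¬ Set.Countable {α : z →L[ℝ] ℝ | ∀ γ ∈ Γ, ∃ n : ℤ, α γ = (n : ℝ)}) :
    ∃ (H : Type) (_ : NormedAddCommGroup H) (_ : InnerProductSpace ℂ H) (_ : CompleteSpace H)
      (π : z → (H →L[ℂ] H)),
      (∀ x, π x ∈ unitary (H →L[ℂ] H)) ∧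
      (∀ x y, π (x + y) = π x * π y) ∧
      (∀ γ ∈ Γ, π γ = 1) ∧
      Continuous π ∧
      Nontrivial H ∧
      ∀ (v : H) (c : z → ℂ), (∀ x, π x v = c x • v) → v = 0 := by
  classical
  set S₀ : Set (z →L[ℝ] ℝ) := {α | ∀ γ ∈ Γ, ∃ n : ℤ, α γ = (n : ℝ)} with hS₀def
  -- find a bounded uncountable piece
  have hcover : S₀ = ⋃ R : ℕ, (S₀ ∩ {α | ‖α‖ ≤ (R : ℝ)}) := by
    ext α
    simp only [Set.mem_iUnion, Set.mem_inter_iff, Set.mem_setOf_eq]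
    constructor
    · intro h
      obtain ⟨R, hR⟩ := exists_nat_ge ‖α‖
      exact ⟨R, h, hR⟩
    · rintro ⟨R, h, -⟩
      exact h
  have hexR : ∃ R : ℕ, ¬ (S₀ ∩ {α | ‖α‖ ≤ (R : ℝ)}).Countable := by
    by_contra h
    push_neg at h
    apply huncount
    rw [hcover]
    exact Set.countable_iUnion h
  obtain ⟨R, hR⟩ := hexR
  -- dense sequence
  have hzne : Nonempty z := ⟨0⟩
  set u : ℕ → z := TopologicalSpace.denseSeq z with hudef
  have hu : DenseRange u := TopologicalSpace.denseRange_denseSeq z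
  -- weak-* setup
  set Φ : WeakDual ℝ z → (ℕ → ℝ) := fun α n => α (u n) with hΦdef
  have hΦcont : Continuous Φ := continuous_pi fun n => WeakDual.eval_continuous (u n)
  have hΦinj : Function.Injective Φ := by
    intro α β h
    apply DFunLike.ext
    have hfun : ⇑α = ⇑β := by
      apply Continuous.ext_on hu (map_continuous α) (map_continuous β)
      rintro x ⟨n, rfl⟩
      exact congrFun h n
    exact fun x => congrFun hfun x
  set SR : Set (WeakDual ℝ z) :=
    WeakDual.toStrongDual ⁻¹' (S₀ ∩ {α | ‖α‖ ≤ (R : ℝ)}) with hSRdef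
  -- compactness
  have hSRcomp : IsCompact SR := by
    have h1 : IsCompact (WeakDual.toStrongDual ⁻¹' Metric.closedBall 0 (R : ℝ)) :=
      WeakDual.isCompact_closedBall (𝕜 := ℝ) (E := z) 0 (R : ℝ)
    apply IsCompact.of_isClosed_subset h1
    · have hc1 : IsClosed {α : WeakDual ℝ z | ∀ γ ∈ Γ, ∃ n : ℤ, α γ = (n : ℝ)} := by
        rw [show {α : WeakDual ℝ z | ∀ γ ∈ Γ, ∃ n : ℤ, α γ = (n : ℝ)}
            = ⋂ γ ∈ (Γ : Set z), {α : WeakDual ℝ z | ∃ n : ℤ, α γ = (n : ℝ)} by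
          ext; simp]
        refine isClosed_biInter fun γ _ => ?_
        rw [show {α : WeakDual ℝ z | ∃ n : ℤ, α γ = (n : ℝ)}
            = (fun α : WeakDual ℝ z => α γ) ⁻¹' (Set.range (fun n : ℤ => (n : ℝ))) by
          ext; simp [eq_comm]]
        exact IsClosed.preimage (WeakDual.eval_continuous γ)
          Int.isClosedEmbedding_coe_real.isClosed_range
      have h2 : SR = {α : WeakDual ℝ z | ∀ γ ∈ Γ, ∃ n : ℤ, α γ = (n : ℝ)}
          ∩ (WeakDual.toStrongDual ⁻¹' Metric.closedBall 0 (R : ℝ)) := by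
        ext α
        simp only [hSRdef, Set.mem_preimage, Set.mem_inter_iff, Set.mem_setOf_eq,
          Metric.mem_closedBall, dist_zero_right]
        rfl
      rw [h2]
      exact IsClosed.inter hc1 h1.isClosed
    · intro α hα
      simp only [hSRdef, Set.mem_preimage, Set.mem_inter_iff, Set.mem_setOf_eq] at hα
      simp only [Set.mem_preimage, Metric.mem_closedBall, dist_zero_right]
      exact hα.2
  set K : Set (ℕ → ℝ) := Φ '' SR with hKdef
  have hKcomp : IsCompact K := hSRcomp.image hΦcont
  have hKcl : IsClosed K := hKcomp.isClosed
  haveI hKpol : PolishSpace ↥K := hKcl.polishSpace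
  -- uncountability
  have hKunc : ¬ Countable ↥K := by
    rw [Set.countable_coe_iff]
    intro h
    apply hR
    have h3 : SR ⊆ Φ ⁻¹' K := fun α hα => Set.mem_image_of_mem Φ hα
    have h2 : SR.Countable := (h.preimage hΦinj).mono h3
    have h4 : (S₀ ∩ {α | ‖α‖ ≤ (R : ℝ)}) = WeakDual.toStrongDual '' SR := by
      rw [hSRdef, Set.image_preimage_eq _ WeakDual.toStrongDual.surjective]
    rw [h4]
    exact h2.image _
  -- measure on K
  set E : ↥K ≃ᵐ ℝ := PolishSpace.measurableEquivOfNotCountable hKunc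
    (fun h => Cardinal.not_countable_real (@Set.countable_univ ℝ h)) with hEdef
  set ν : Measure ℝ := volume.restrict (Set.Icc 0 1) with hνdef
  haveI : IsProbabilityMeasure ν :=
    ⟨by rw [hνdef, Measure.restrict_apply_univ, Real.volume_Icc]; norm_num⟩
  set μ : Measure ↥K := ν.map E.symm with hμdef
  haveI : IsProbabilityMeasure μ := Measure.isProbabilityMeasure_map E.symm.measurable.aemeasurable
  haveI : NullSingletonClass μ := by
    constructor
    intro k
    rw [hμdef, MeasurableEquiv.map_apply]
    have hpre : E.symm ⁻¹' {k} = {E k} := by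
      ext r
      simp only [Set.mem_preimage, Set.mem_singleton_iff]
      exact ⟨fun h => by rw [← h, MeasurableEquiv.apply_symm_apply],
        fun h => by rw [h, MeasurableEquiv.symm_apply_apply]⟩
    rw [hpre]
    exact measure_singleton _
  -- the inverse parametrization
  have hψex : ∀ k : ↥K, ∃ α : WeakDual ℝ z, α ∈ SR ∧ Φ α = (k : ℕ → ℝ) := by
    intro k
    obtain ⟨α, hα, hφ⟩ := k.2
    exact ⟨α, hα, hφ⟩
  choose ψ hψSR hψΦ using hψex
  set e : z → ↥K → ℝ := fun x k => ψ k x with hedef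
  -- properties of e
  have hadd : ∀ x y k, e (x + y) k = e x k + e y k := fun x y k => map_add (ψ k) x y
  have hsmul : ∀ (r : ℝ) (x : z) (k : ↥K), e (r • x) k = r * e x k := fun r x k => by
    rw [hedef]
    simp only [_root_.map_smul, smul_eq_mul]
  have hψnorm : ∀ k : ↥K, ‖WeakDual.toStrongDual (ψ k)‖ ≤ (R : ℝ) := fun k => (hψSR k).2
  have hbound : ∀ x k, |e x k| ≤ (R : ℝ) * ‖x‖ := by
    intro x k
    have h1 : |e x k| = ‖(WeakDual.toStrongDual (ψ k)) x‖ := (Real.norm_eq_abs _).symm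
    rw [h1]
    calc ‖(WeakDual.toStrongDual (ψ k)) x‖
        ≤ ‖WeakDual.toStrongDual (ψ k)‖ * ‖x‖ := ContinuousLinearMap.le_opNorm _ x
      _ ≤ (R : ℝ) * ‖x‖ := mul_le_mul_of_nonneg_right (hψnorm k) (norm_nonneg x)
  have hint : ∀ γ ∈ Γ, ∀ k : ↥K, ∃ n : ℤ, e γ k = (n : ℝ) := by
    intro γ hγ k
    exact (hψSR k).1 γ hγ
  have hcoord : ∀ (k : ↥K) (n : ℕ), ψ k (u n) = (k : ℕ → ℝ) n := by
    intro k n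
    have := hψΦ k
    exact congrFun this n
  have hcontish : ∀ x, Continuous (e x) := by
    intro x
    have hex : ∀ j : ℕ, ∃ n, dist x (u n) < 1 / (j + 1) := by
      intro j
      exact (Metric.denseRange_iff.mp hu) x _ (by positivity)
    choose n hn using hex
    have huc : TendstoUniformly (fun j (k : ↥K) => (k : ℕ → ℝ) (n j)) (e x) atTop := by
      rw [Metric.tendstoUniformly_iff]
      intro ε hε
      have htend : Tendsto (fun j : ℕ => (R : ℝ) * (1 / (j + 1))) atTop (nhds 0) := by
        have h0 : Tendsto (fun n : ℕ => 1 / ((n : ℝ) + 1)) atTop (nhds 0) :=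
          tendsto_one_div_add_atTop_nhds_zero_nat
        have := h0.const_mul (R : ℝ)
        simpa using this
      filter_upwards [htend.eventually_lt_const hε] with j hj k
      have h2 : (k : ℕ → ℝ) (n j) = ψ k (u (n j)) := (hcoord k (n j)).symm
      rw [Real.dist_eq, h2]
      have h3 : e x k - ψ k (u (n j)) = ψ k (x - u (n j)) := by
        rw [hedef, map_sub]
      rw [h3]
      calc |ψ k (x - u (n j))| ≤ (R : ℝ) * ‖x - u (n j)‖ := hbound (x - u (n j)) k
        _ ≤ (R : ℝ) * (1 / (j + 1)) := by
            apply mul_le_mul_of_nonneg_left _ (by positivity)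
            rw [← dist_eq_norm]
            exact le_of_lt (hn j)
        _ < ε := hj
    exact huc.continuous (Filter.Eventually.of_forall fun j =>
      (continuous_apply (n j)).comp continuous_subtype_val).frequently
  have hmeas : ∀ x, Measurable (e x) := fun x => (hcontish x).measurable
  have hsep : ∀ k k' : ↥K, (∀ n, e (u n) k = e (u n) k') → k = k' := by
    intro k k' h
    apply Subtype.ext
    have h1 : Φ (ψ k) = Φ (ψ k') := by
      funext n
      exact h n
    rw [hψΦ k, hψΦ k'] at h1
    exact h1
  exact key Γ μ e (R : ℝ) hadd hsmul hmeas hbound hint u hsep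

end
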